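/- Fix 0 < δ < 1 and m ≥ 2, and set M = ⌈m log(m/δ)⌉ and T = ⌈e log(m/δ)⌉. Let j_0, …, j_{M-1} be i.i.d. uniform on {1, …, m}. Then with probability at least 1 - 2δ, every element of {1, …, m} appears at least once and at most T times among j_0, …, j_{M-1}. -/

import Mathlib

open MeasureTheory ProbabilityTheory
open scoped ENNReal

lemma stmt12_aux1 (m : ℕ) (hm : 2 ≤ m) (δ : ℝ) (hδ0 : 0 < δ)
    (M : ℕ) (hM : (m : ℝ) * Real.log ((m : ℝ)/δ) ≤ M) :
    (1 - 1/(m:ℝ))^M ≤ δ/m := by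
  have hm0 : (0:ℝ) < m := by positivity
  have hm2 : (2:ℝ) ≤ m := by exact_mod_cast hm
  have h1 : 1 - 1/(m:ℝ) ≤ Real.exp (-(1/m)) := by
    have := Real.add_one_le_exp (-(1/(m:ℝ))); linarith
  have h0 : (0:ℝ) ≤ 1 - 1/(m:ℝ) := by
    have : 1/(m:ℝ) ≤ 1/2 := by
      apply one_div_le_one_div_of_le <;> linarith
    linarith
  calc (1 - 1/(m:ℝ))^M ≤ (Real.exp (-(1/m)))^M := pow_le_pow_left₀ h0 h1 M
    _ = Real.exp (-(M/m)) := by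
        rw [← Real.exp_nat_mul]; ring_nf
    _ ≤ Real.exp (- Real.log ((m:ℝ)/δ)) := by
        apply Real.exp_le_exp.2
        rw [neg_le_neg_iff, le_div_iff₀ hm0]
        linarith
    _ = δ/m := by
        rw [Real.exp_neg, Real.exp_log (by positivity), inv_div]

lemma stmt12_aux2 (m : ℕ) (hm : 2 ≤ m) (δ : ℝ) (hδ0 : 0 < δ)
    (M T : ℕ) (hM : (M:ℝ) ≤ (m:ℝ) * Real.log ((m:ℝ)/δ) + 1)
    (hT : Real.exp 1 * Real.log ((m:ℝ)/δ) ≤ T) :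
    Real.exp (-1 * ((T:ℝ)+1)) * ((Real.exp 1 - 1) * (1/(m:ℝ)) + 1)^M ≤ δ/m := by
  have hm0 : (0:ℝ) < m := by positivity
  have hm2 : (2:ℝ) ≤ m := by exact_mod_cast hm
  set L := Real.log ((m:ℝ)/δ) with hL
  set e := Real.exp 1 with he
  have he1 : 1 < e := by rw [he]; linarith [Real.exp_one_gt_d9]
  have he3 : e < 2.7182818286 := Real.exp_one_lt_d9
  have hstep : (e - 1) * (1/(m:ℝ)) + 1 ≤ Real.exp ((e-1) * (1/m)) :=
    Real.add_one_le_exp _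
  have h1m : (0:ℝ) < 1/(m:ℝ) := by positivity
  have h0 : (0:ℝ) ≤ (e - 1) * (1/(m:ℝ)) + 1 := by nlinarith
  have hMn : (0:ℝ) ≤ (M:ℝ) := Nat.cast_nonneg M
  calc Real.exp (-1 * ((T:ℝ)+1)) * ((e - 1) * (1/(m:ℝ)) + 1)^M
      ≤ Real.exp (-1 * ((T:ℝ)+1)) * (Real.exp ((e-1) * (1/m)))^M := by
        apply mul_le_mul_of_nonneg_left (pow_le_pow_left₀ h0 hstep M) (Real.exp_pos _).le
    _ = Real.exp ((M:ℝ) * ((e-1)/m) - ((T:ℝ)+1)) := by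
        rw [← Real.exp_nat_mul, ← Real.exp_add]; ring_nf
    _ ≤ Real.exp (-L) := by
        apply Real.exp_le_exp.2
        have h1 : (M:ℝ) * ((e-1)/m) ≤ ((m:ℝ)*L+1) * ((e-1)/m) := by
          apply mul_le_mul_of_nonneg_right hM (div_nonneg (by linarith) hm0.le)
        have h2 : ((m:ℝ)*L+1) * ((e-1)/m) = (e-1)*L + (e-1)/m := by
          field_simp
        have h3 : (e-1)/m ≤ 1 := by
          rw [div_le_one hm0]; linarith
        nlinarith
    _ = δ/m := by
        rw [Real.exp_neg, hL, Real.exp_log (by positivity), inv_div]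

/-- with `M = ⌈m log(m/δ)⌉` i.i.d. uniform samples from `{1,…,m}` and
`T = ⌈e log(m/δ)⌉`, with probability at least `1 - 2δ` every element of `{1,…,m}` appears
at least once and at most `T` times. -/
theorem stmt12 {Ω : Type*} [MeasurableSpace Ω] (μ : Measure Ω) [IsProbabilityMeasure μ]
    (m : ℕ) (hm : 2 ≤ m) (δ : ℝ) (hδ0 : 0 < δ) (hδ1 : δ < 1)
    (M T : ℕ)
    (hM : M = ⌈(m : ℝ) * Real.log ((m : ℝ) / δ)⌉₊)
    (hT : T = ⌈Real.exp 1 * Real.log ((m : ℝ) / δ)⌉₊)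
    (j : Fin M → Ω → Fin m) (hmeas : ∀ l, Measurable (j l))
    (hindep : iIndepFun j μ)
    (hunif : ∀ l (a : Fin m), μ {ω | j l ω = a} = 1 / m) :
    ENNReal.ofReal (1 - 2 * δ) ≤
      μ {ω | ∀ a : Fin m,
        1 ≤ (Finset.univ.filter fun l => j l ω = a).card ∧
          (Finset.univ.filter fun l => j l ω = a).card ≤ T} := by
  classical
  have hm0 : (0:ℝ) < m := by positivity
  have hm2 : (2:ℝ) ≤ m := by exact_mod_cast hm
  set L := Real.log ((m:ℝ)/δ) with hLdef
  have hL0 : 0 ≤ L := Real.log_nonneg (by rw [le_div_iff₀ hδ0]; linarith)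
  have hMlow : (m:ℝ) * L ≤ M := by rw [hM]; exact Nat.le_ceil _
  have hMhigh : (M:ℝ) ≤ (m:ℝ) * L + 1 := by
    rw [hM]; exact le_of_lt (Nat.ceil_lt_add_one (by positivity))
  have hTlow : Real.exp 1 * L ≤ T := by rw [hT]; exact Nat.le_ceil _
  -- indicator variables
  set X : Fin m → Fin M → Ω → ℝ := fun a l ω => if j l ω = a then 1 else 0 with hXdef
  have hSet : ∀ (l : Fin M) (a : Fin m), MeasurableSet {ω | j l ω = a} :=
    fun l a => hmeas l (measurableSet_singleton a)
  have hXmeas : ∀ a l, Measurable (X a l) := fun a l =>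
    Measurable.ite (hSet l a) measurable_const measurable_const
  have hXindep : ∀ a, iIndepFun (X a) μ := fun a =>
    hindep.comp (fun _ b => if b = a then (1:ℝ) else 0) (fun _ => measurable_of_countable _)
  have hYN : ∀ (a : Fin m) (ω : Ω),
      (∑ l : Fin M, X a l) ω = ((Finset.univ.filter fun l => j l ω = a).card : ℝ) := by
    intro a ω
    rw [Finset.sum_apply, Finset.card_filter]
    push_cast
    refine Finset.sum_congr rfl fun l _ => ?_
    by_cases h : j l ω = a <;> simp [hXdef, h]
  -- bad events
  set A : Fin m → Set Ω := fun a => ⋂ l, {ω | j l ω ≠ a} with hAdef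
  set B : Fin m → Set Ω := fun a => {ω | ((T:ℝ)+1) ≤ (∑ l : Fin M, X a l) ω} with hBdef
  have hAmeas : ∀ a, MeasurableSet (A a) := fun a =>
    MeasurableSet.iInter fun l => (hSet l a).compl
  have hYmeas : ∀ a, Measurable (∑ l : Fin M, X a l) := fun a => by
    have h1 : (∑ l : Fin M, X a l) = fun ω => ∑ l : Fin M, X a l ω := by
      funext ω; exact Finset.sum_apply _ _ _
    rw [h1]
    exact Finset.measurable_sum _ (fun l _ => hXmeas a l)
  have hBmeas : ∀ a, MeasurableSet (B a) :=
    fun a => measurableSet_le measurable_const (hYmeas a)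
  -- bound on A
  have hA : ∀ a, μ (A a) ≤ ENNReal.ofReal (δ/m) := by
    intro a
    have hprod : μ (A a) = ∏ l : Fin M, μ {ω | j l ω ≠ a} := by
      refine hindep.meas_iInter (fun l => ⟨{a}ᶜ, (measurableSet_singleton a).compl, ?_⟩)
      ext ω; simp
    have hone : ∀ l : Fin M, μ {ω | j l ω ≠ a} = ENNReal.ofReal (1 - 1/(m:ℝ)) := by
      intro l
      have hc : {ω | j l ω ≠ a} = {ω | j l ω = a}ᶜ := rfl
      rw [hc, measure_compl (hSet l a) (measure_ne_top μ _), hunif l a, measure_univ]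
      rw [ENNReal.ofReal_sub _ (by positivity), ENNReal.ofReal_one]
      congr 1
      rw [ENNReal.ofReal_div_of_pos hm0, ENNReal.ofReal_one, ENNReal.ofReal_natCast]
    rw [hprod]
    simp only [hone]
    rw [Finset.prod_const, Finset.card_univ, Fintype.card_fin,
      ← ENNReal.ofReal_pow (by
        have : 1/(m:ℝ) ≤ 1/2 := by apply one_div_le_one_div_of_le <;> linarith
        linarith)]
    exact ENNReal.ofReal_le_ofReal (stmt12_aux1 m hm δ hδ0 M hMlow)
  -- bound on B
  have hB : ∀ a, μ (B a) ≤ ENNReal.ofReal (δ/m) := by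
    intro a
    have hint : ∀ l : Fin M, Integrable (fun ω => Real.exp (1 * X a l ω)) μ := by
      intro l
      have heq : (fun ω => Real.exp (1 * X a l ω)) =
          fun ω => (Real.exp 1 - 1) * Set.indicator {ω | j l ω = a} (fun _ => (1:ℝ)) ω + 1 := by
        funext ω
        by_cases h : j l ω = a <;> simp [hXdef, h]
      rw [heq]
      refine Integrable.add ?_ (integrable_const 1)
      exact (((integrable_indicator_iff (hSet l a)).2
        (integrableOn_const (measure_ne_top μ _))).const_mul _)
    have hmgf1 : ∀ l : Fin M, mgf (X a l) μ 1 = (Real.exp 1 - 1) * (1/(m:ℝ)) + 1 := by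
      intro l
      have heq : (fun ω => Real.exp (1 * X a l ω)) =
          fun ω => (Real.exp 1 - 1) * Set.indicator {ω | j l ω = a} (fun _ => (1:ℝ)) ω + 1 := by
        funext ω
        by_cases h : j l ω = a <;> simp [hXdef, h]
      rw [mgf, heq]
      rw [integral_add ((((integrable_indicator_iff (hSet l a)).2
        (integrableOn_const (measure_ne_top μ _))).const_mul _)) (integrable_const 1)]
      rw [integral_const, integral_const_mul, integral_indicator_const _ (hSet l a)]
      rw [measureReal_def, measureReal_def, hunif l a, measure_univ]
      simp [ENNReal.toReal_div]
    have hintY : Integrable (fun ω => Real.exp (1 * (∑ l : Fin M, X a l) ω)) μ :=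
      (hXindep a).integrable_exp_mul_sum (hXmeas a) (fun l _ => hint l)
    have key := measure_ge_le_exp_mul_mgf (μ := μ) (X := ∑ l : Fin M, X a l)
      ((T:ℝ)+1) zero_le_one hintY
    rw [(hXindep a).mgf_sum (hXmeas a) Finset.univ] at key
    simp only [hmgf1, Finset.prod_const, Finset.card_univ, Fintype.card_fin] at key
    have key2 : (μ (B a)).toReal ≤ δ/m := by
      refine le_trans key ?_
      exact stmt12_aux2 m hm δ hδ0 M T hMhigh hTlow
    rw [← ENNReal.ofReal_toReal (measure_ne_top μ (B a))]
    exact ENNReal.ofReal_le_ofReal key2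
  -- union bound
  set Bad : Set Ω := ⋃ a : Fin m, (A a ∪ B a) with hBadDef
  have hBadMeas : MeasurableSet Bad :=
    MeasurableSet.iUnion fun a => (hAmeas a).union (hBmeas a)
  have hBadBound : μ Bad ≤ ENNReal.ofReal (2*δ) := by
    calc μ Bad ≤ ∑' a : Fin m, μ (A a ∪ B a) := measure_iUnion_le _
      _ = ∑ a : Fin m, μ (A a ∪ B a) := tsum_fintype _
      _ ≤ ∑ a : Fin m, (ENNReal.ofReal (δ/m) + ENNReal.ofReal (δ/m)) := by
          refine Finset.sum_le_sum fun a _ => ?_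
          exact le_trans (measure_union_le _ _) (add_le_add (hA a) (hB a))
      _ = (m : ℝ≥0∞) * ENNReal.ofReal (2*(δ/m)) := by
          rw [Finset.sum_const, Finset.card_univ, Fintype.card_fin, nsmul_eq_mul]
          congr 1
          rw [← ENNReal.ofReal_add (by positivity) (by positivity)]
          ring_nf
      _ = ENNReal.ofReal (2*δ) := by
          rw [← ENNReal.ofReal_natCast m, ← ENNReal.ofReal_mul (by positivity)]
          congr 1
          field_simp
  have hsub : Badᶜ ⊆ {ω | ∀ a : Fin m,
      1 ≤ (Finset.univ.filter fun l => j l ω = a).card ∧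
        (Finset.univ.filter fun l => j l ω = a).card ≤ T} := by
    intro ω hω a
    simp only [hBadDef, Set.compl_iUnion, Set.mem_iInter, Set.mem_compl_iff] at hω
    have hω' := hω a
    rw [Set.mem_union, not_or] at hω'
    obtain ⟨hA', hB'⟩ := hω'
    constructor
    · rw [hAdef] at hA'
      simp only [Set.mem_iInter, Set.mem_setOf_eq, not_forall, not_not] at hA'
      obtain ⟨l, hl⟩ := hA'
      exact Finset.card_pos.2 ⟨l, Finset.mem_filter.2 ⟨Finset.mem_univ l, hl⟩⟩
    · rw [hBdef] at hB'
      simp only [Set.mem_setOf_eq, not_le, hYN a ω] at hB'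
      have : ((Finset.univ.filter fun l => j l ω = a).card : ℝ) < ((T:ℕ):ℝ) + 1 := hB'
      have h2 : (Finset.univ.filter fun l => j l ω = a).card < T + 1 := by exact_mod_cast this
      omega
  calc ENNReal.ofReal (1 - 2*δ) = 1 - ENNReal.ofReal (2*δ) := by
        rw [ENNReal.ofReal_sub _ (by positivity), ENNReal.ofReal_one]
    _ ≤ 1 - μ Bad := tsub_le_tsub_left hBadBound 1
    _ = μ Badᶜ := by rw [measure_compl hBadMeas (measure_ne_top μ _), measure_univ]
    _ ≤ _ := measure_mono hsub
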